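/- For λ ∈ Q_p/Z_p with |λ|_p = p^n > 1 and ξ, η ∈ (Q_p/Z_p)^d, the map π_{(ξ,η,λ)}(x,y,z)φ(u) := e^{2πi{ξ·x + η·y + λ(z + u·y)}_p} φ(u+x) defines a unitary representation of the Heisenberg group H_d(Z_p) on the space H_λ of locally constant functions on Z_p^d that are invariant under translation by p^n Z_p^d. -/

import Mathlib

set_option maxHeartbeats 1000000


noncomputable section

variable (p : ℕ) [Fact p.Prime] (d : ℕ)

def dotZ (x y : Fin d → ℤ_[p]) : ℤ_[p] := ∑ i, x i * y i

/-- The Heisenberg group `H_d(ℤ_p)`: the set `ℤ_p^{2d+1}` written as triples `(x, y, z)`. -/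
@[ext] structure Heis where
  x : Fin d → ℤ_[p]
  y : Fin d → ℤ_[p]
  z : ℤ_[p]

variable {p d}

instance : Mul (Heis p d) :=
  ⟨fun g g' => ⟨g.x + g'.x, g.y + g'.y, g.z + g'.z + dotZ p d g.x g'.y⟩⟩
instance : One (Heis p d) := ⟨⟨0, 0, 0⟩⟩
instance : Inv (Heis p d) :=
  ⟨fun g => ⟨-g.x, -g.y, -g.z + dotZ p d g.x g.y⟩⟩

lemma heis_mul_def (g g' : Heis p d) :
    g * g' = ⟨g.x + g'.x, g.y + g'.y, g.z + g'.z + dotZ p d g.x g'.y⟩ := rfl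
lemma heis_one_def : (1 : Heis p d) = ⟨0, 0, 0⟩ := rfl
lemma heis_inv_def (g : Heis p d) :
    g⁻¹ = ⟨-g.x, -g.y, -g.z + dotZ p d g.x g.y⟩ := rfl

instance heisGroup : Group (Heis p d) :=
  Group.ofLeftAxioms
    (by
      rintro ⟨a1, a2, a3⟩ ⟨b1, b2, b3⟩ ⟨c1, c2, c3⟩
      simp only [heis_mul_def, dotZ, Pi.add_apply, add_mul, mul_add,
        Finset.sum_add_distrib, Heis.mk.injEq]
      refine ⟨add_assoc _ _ _, add_assoc _ _ _, by ring⟩)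
    (by
      rintro ⟨a1, a2, a3⟩
      simp [heis_mul_def, heis_one_def, dotZ])
    (by
      rintro ⟨a1, a2, a3⟩
      simp only [heis_mul_def, heis_inv_def, heis_one_def, dotZ,
        Pi.neg_apply, Heis.mk.injEq, neg_add_cancel]
      refine ⟨trivial, trivial, by ring_nf; simp⟩)

open MeasureTheory

variable (p d)

/-- Truncation of a `p`-adic number to a `p`-adic integer (`0` if it is not an integer). -/
def padicToInt (x : ℚ_[p]) : ℤ_[p] := if h : ‖x‖ ≤ 1 then ⟨x, h⟩ else 0

/-- The `p`-adic fractional part `{x}_p`, as a rational number. -/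
def padicFract (x : ℚ_[p]) : ℚ :=
  ((padicToInt p (x * (p : ℚ_[p]) ^ (-x.valuation).toNat)).appr (-x.valuation).toNat : ℚ) /
    (p : ℚ) ^ (-x.valuation).toNat

/-- The additive character `x ↦ e^{2πi {x}_p}` of `ℚ_p`. -/
def eChar (x : ℚ_[p]) : ℂ := Complex.exp (2 * Real.pi * Complex.I * (padicFract p x : ℂ))

instance : MeasurableSpace ℤ_[p] := borel _
instance : BorelSpace ℤ_[p] := ⟨rfl⟩
instance : TopologicalSpace (Heis p d) :=
  TopologicalSpace.induced (fun g => (g.x, g.y, g.z)) inferInstance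
instance : MeasurableSpace (Heis p d) := borel _
instance : BorelSpace (Heis p d) := ⟨rfl⟩

/-- Pairing of a `ℚ_p`-covector with a `ℤ_p`-vector. -/
def dotQZ (ξ : Fin d → ℚ_[p]) (x : Fin d → ℤ_[p]) : ℚ_[p] := ∑ i, ξ i * (x i : ℚ_[p])

/-- The Schrödinger-type realization
`π_{(ξ,η,λ)}(x,y,z)φ(u) = e^{2πi{ξ·x + η·y + λ(z + u·y)}_p} φ(u + x)`. -/
def piAct (ξ η : Fin d → ℚ_[p]) (lam : ℚ_[p]) (g : Heis p d)
    (φ : (Fin d → ℤ_[p]) → ℂ) : (Fin d → ℤ_[p]) → ℂ := fun u =>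
  eChar p (dotQZ p d ξ g.x + dotQZ p d η g.y +
      lam * ((g.z : ℚ_[p]) + (dotZ p d u g.y : ℚ_[p]))) * φ (u + g.x)

/-- `φ` is invariant under translations by `p^n ℤ_p^d`. -/
def InvariantUnder (n : ℕ) (φ : (Fin d → ℤ_[p]) → ℂ) : Prop :=
  ∀ u v : Fin d → ℤ_[p], (∀ i, ‖v i‖ ≤ (p : ℝ) ^ (-(n : ℤ))) → φ (u + v) = φ u

/-- The indicator function of the coset `h + p^n ℤ_p^d`. -/
def indC (n : ℕ) (h : Fin d → ℤ_[p]) : (Fin d → ℤ_[p]) → ℂ :=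
  Set.indicator {u | ∀ i, ‖u i - h i‖ ≤ (p : ℝ) ^ (-(n : ℤ))} fun _ => (1 : ℂ)


namespace Stmt5Aux

variable {p : ℕ} [Fact p.Prime] {d : ℕ}

lemma appr_zero (y : ℤ_[p]) : y.appr 0 = 0 := rfl

lemma padicFract_of_norm_le (x : ℚ_[p]) (h : ‖x‖ ≤ 1) : padicFract p x = 0 := by
  have hv : 0 ≤ x.valuation := (Padic.norm_le_one_iff_val_nonneg x).1 h
  have hm : (-x.valuation).toNat = 0 := Int.toNat_eq_zero.2 (by omega)
  rw [padicFract, hm]; simp [appr_zero]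

lemma padicFract_eq (x : ℚ_[p]) : ∃ (c : ℕ) (m : ℕ),
    padicFract p x = (c : ℚ) / (p : ℚ) ^ m ∧ ‖x - ((padicFract p x : ℚ) : ℚ_[p])‖ ≤ 1 := by
  refine ⟨_, (-x.valuation).toNat, rfl, ?_⟩
  by_cases h : ‖x‖ ≤ 1
  · rw [padicFract_of_norm_le x h]; simpa using h
  · set m := (-x.valuation).toNat with hm
    have hx0 : x ≠ 0 := by rintro rfl; simp at h
    have hval : ‖x‖ = (p : ℝ) ^ (-x.valuation) := Padic.norm_eq_zpow_neg_valuation hx0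
    have hvneg : x.valuation < 0 := by
      by_contra hc
      push_neg at hc
      exact h ((Padic.norm_le_one_iff_val_nonneg x).2 hc)
    have hmval : (m : ℤ) = -x.valuation := Int.toNat_of_nonneg (by omega)
    have hpR : (0:ℝ) < p := by exact_mod_cast (Fact.out : p.Prime).pos
    have hnormp : ‖((p : ℚ_[p]) ^ m)‖ = (p : ℝ) ^ (-(m:ℤ)) := by
      rw [norm_pow, Padic.norm_p, inv_pow, ← zpow_natCast (p:ℝ), ← zpow_neg]
    have hle : ‖x * (p : ℚ_[p]) ^ m‖ ≤ 1 := by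
      rw [norm_mul, hval, hnormp, ← zpow_add₀ (ne_of_gt hpR)]
      rw [show -x.valuation + -(m:ℤ) = 0 by omega, zpow_zero]
    have hyx : ((padicToInt p (x * (p : ℚ_[p]) ^ m) : ℤ_[p]) : ℚ_[p]) = x * (p : ℚ_[p]) ^ m := by
      have e : padicToInt p (x * (p : ℚ_[p]) ^ m) = ⟨x * (p : ℚ_[p]) ^ m, hle⟩ := dif_pos hle
      rw [e]
    set y := padicToInt p (x * (p : ℚ_[p]) ^ m)
    have hspec : ‖y - (y.appr m : ℤ_[p])‖ ≤ (p:ℝ) ^ (-(m:ℤ)) :=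
      (PadicInt.norm_le_pow_iff_mem_span_pow _ m).2 (PadicInt.appr_spec m y)
    have hcast : ((padicFract p x : ℚ) : ℚ_[p]) = (y.appr m : ℚ_[p]) / (p : ℚ_[p]) ^ m := by
      rw [padicFract]
      push_cast
      rfl
    have hpne : ((p : ℚ_[p]) ^ m) ≠ 0 := by
      apply pow_ne_zero
      exact_mod_cast (Nat.Prime.ne_zero Fact.out)
    have heq : x - ((padicFract p x : ℚ) : ℚ_[p])
        = ((y - (y.appr m : ℤ_[p]) : ℤ_[p]) : ℚ_[p]) / (p : ℚ_[p]) ^ m := by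
      rw [hcast]
      push_cast [hyx]
      field_simp
    rw [heq, norm_div, hnormp, PadicInt.padic_norm_e_of_padicInt]
    calc ‖y - (y.appr m : ℤ_[p])‖ / (p:ℝ) ^ (-(m:ℤ))
        ≤ (p:ℝ) ^ (-(m:ℤ)) / (p:ℝ) ^ (-(m:ℤ)) := by gcongr
      _ = 1 := div_self (by positivity)

lemma rat_int_of_pow_den (r : ℚ) (M : ℕ) (c : ℤ) (hc : r * (p:ℚ) ^ M = c)
    (hn : ‖((r : ℚ) : ℚ_[p])‖ ≤ 1) : ∃ k : ℤ, r = k := by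
  induction M generalizing r c with
  | zero => exact ⟨c, by simpa using hc⟩
  | succ M ih =>
    have hp0 : (p:ℚ) ≠ 0 := by exact_mod_cast (Fact.out : p.Prime).ne_zero
    have hs : (r * p) * (p:ℚ) ^ M = c := by rw [← hc]; ring
    have hsn : ‖(((r * p : ℚ)) : ℚ_[p])‖ ≤ 1 := by
      push_cast
      rw [norm_mul]
      have h1 : ‖((p:ℕ) : ℚ_[p])‖ ≤ 1 := by
        rw [Padic.norm_p, inv_le_one_iff₀]
        right; exact_mod_cast (Fact.out : p.Prime).one_le
      calc ‖((r:ℚ):ℚ_[p])‖ * ‖((p:ℕ) : ℚ_[p])‖ ≤ 1 * 1 :=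
            mul_le_mul hn h1 (norm_nonneg _) zero_le_one
        _ = 1 := one_mul 1
    obtain ⟨k, hk⟩ := ih (r * p) c hs hsn
    have hdvd : (p:ℤ) ∣ k := by
      rw [← Padic.norm_intCast_lt_one_iff]
      have hr : ((k:ℚ):ℚ_[p]) = ((r:ℚ):ℚ_[p]) * (p:ℚ_[p]) := by
        rw [← hk]; push_cast; ring
      have hkn : ‖((k:ℤ):ℚ_[p])‖ = ‖((r:ℚ):ℚ_[p])‖ * (↑p)⁻¹ := by
        rw [show ((k:ℤ):ℚ_[p]) = ((k:ℚ):ℚ_[p]) by push_cast; ring, hr, norm_mul,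
          Padic.norm_p]
      rw [hkn]
      have hp1 : (1:ℝ) < p := by exact_mod_cast (Fact.out : p.Prime).one_lt
      calc ‖((r:ℚ):ℚ_[p])‖ * (↑p:ℝ)⁻¹ ≤ 1 * (↑p:ℝ)⁻¹ := by
            apply mul_le_mul_of_nonneg_right hn (by positivity)
        _ < 1 := by rw [one_mul, inv_lt_one_iff₀]; right; exact hp1
    obtain ⟨j, rfl⟩ := hdvd
    have h2 : r * p = (j:ℚ) * p := by rw [hk]; push_cast; ring
    exact ⟨j, mul_right_cancel₀ hp0 h2⟩

lemma norm_add_le_one {u v : ℚ_[p]} (hu : ‖u‖ ≤ 1) (hv : ‖v‖ ≤ 1) : ‖u + v‖ ≤ 1 :=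
  le_trans (Padic.nonarchimedean u v) (max_le hu hv)

lemma eChar_add (a b : ℚ_[p]) : eChar p (a + b) = eChar p a * eChar p b := by
  obtain ⟨ca, ma, hfa, hna⟩ := padicFract_eq a
  obtain ⟨cb, mb, hfb, hnb⟩ := padicFract_eq b
  obtain ⟨cc, mc, hfc, hnc⟩ := padicFract_eq (a + b)
  set fa := padicFract p a with hfa0
  set fb := padicFract p b with hfb0
  set fc := padicFract p (a + b) with hfc0
  set r : ℚ := fc - fa - fb with hr
  have hp0 : (p:ℚ) ≠ 0 := by exact_mod_cast (Fact.out : p.Prime).ne_zero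
  have hint : r * (p:ℚ) ^ (ma + mb + mc) =
      ((cc : ℤ) * (p:ℤ)^(ma+mb) - (ca:ℤ) * (p:ℤ)^(mb+mc) - (cb:ℤ) * (p:ℤ)^(ma+mc) : ℤ) := by
    rw [hr, hfa, hfb, hfc]
    push_cast
    field_simp
    ring
  have hcast : ((r : ℚ) : ℚ_[p]) =
      ((a + b) - ((fc:ℚ):ℚ_[p])) * (-1) + ((a - ((fa:ℚ):ℚ_[p])) + (b - ((fb:ℚ):ℚ_[p]))) := by
    rw [hr]; push_cast; ring
  have hnr : ‖((r : ℚ) : ℚ_[p])‖ ≤ 1 := by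
    rw [hcast]
    apply norm_add_le_one
    · rw [norm_mul, norm_neg, norm_one, mul_one]; exact hnc
    · exact norm_add_le_one hna hnb
  obtain ⟨k, hk⟩ := rat_int_of_pow_den r _ _ hint hnr
  have hfc' : fc = fa + fb + (k:ℚ) := by rw [← hk, hr]; ring
  simp only [eChar, ← hfa0, ← hfb0, ← hfc0]
  rw [hfc',
    show 2 * (Real.pi:ℂ) * Complex.I * (((fa + fb + (k:ℚ)):ℚ):ℂ)
      = 2 * (Real.pi:ℂ) * Complex.I * (fa:ℂ) + 2 * (Real.pi:ℂ) * Complex.I * (fb:ℂ)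
        + (k:ℂ) * (2 * (Real.pi:ℂ) * Complex.I) by push_cast; ring,
    Complex.exp_add, Complex.exp_add, Complex.exp_int_mul_two_pi_mul_I, mul_one]

lemma eChar_of_norm_le (x : ℚ_[p]) (h : ‖x‖ ≤ 1) : eChar p x = 1 := by
  rw [eChar, padicFract_of_norm_le x h]; simp

lemma eChar_zero : eChar p (0 : ℚ_[p]) = 1 := eChar_of_norm_le 0 (by simp)

lemma eChar_mul_conj (x : ℚ_[p]) : eChar p x * (starRingEnd ℂ) (eChar p x) = 1 := by
  rw [eChar, ← Complex.exp_conj, ← Complex.exp_add]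
  have h : (starRingEnd ℂ) (2 * (Real.pi:ℂ) * Complex.I * ((padicFract p x : ℚ):ℂ))
      = -(2 * (Real.pi:ℂ) * Complex.I * ((padicFract p x : ℚ):ℂ)) := by
    rw [map_mul, map_mul, map_mul, Complex.conj_I, map_ratCast, Complex.conj_ofReal, map_ofNat]
    ring
  rw [h, add_neg_cancel, Complex.exp_zero]

lemma norm_dotZ_le (n : ℕ) (v y : Fin d → ℤ_[p]) (hv : ∀ i, ‖v i‖ ≤ (p:ℝ) ^ (-(n:ℤ))) :
    ‖dotZ p d v y‖ ≤ (p:ℝ) ^ (-(n:ℤ)) := by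
  have h0 : (0:ℝ) ≤ (p:ℝ) ^ (-(n:ℤ)) := by
    have : (0:ℝ) < p := by exact_mod_cast (Fact.out : p.Prime).pos
    positivity
  refine Finset.sum_induction _ (fun z => ‖z‖ ≤ (p:ℝ) ^ (-(n:ℤ)))
    (fun a b ha hb => le_trans (PadicInt.nonarchimedean a b) (max_le ha hb))
    (by simpa using h0) (fun i _ => ?_)
  calc ‖v i * y i‖ ≤ ‖v i‖ * ‖y i‖ := norm_mul_le _ _
    _ ≤ (p:ℝ) ^ (-(n:ℤ)) * 1 :=
        mul_le_mul (hv i) (PadicInt.norm_le_one _) (norm_nonneg _) h0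
    _ = (p:ℝ) ^ (-(n:ℤ)) := mul_one _

lemma dotQZ_add (ξ : Fin d → ℚ_[p]) (a b : Fin d → ℤ_[p]) :
    dotQZ p d ξ (a + b) = dotQZ p d ξ a + dotQZ p d ξ b := by
  simp only [dotQZ, ← Finset.sum_add_distrib]
  refine Finset.sum_congr rfl fun i _ => ?_
  push_cast [Pi.add_apply]
  ring

lemma dotZ_add_left (a b y : Fin d → ℤ_[p]) :
    dotZ p d (a + b) y = dotZ p d a y + dotZ p d b y := by
  simp only [dotZ, ← Finset.sum_add_distrib]
  exact Finset.sum_congr rfl fun i _ => by simp [Pi.add_apply, add_mul]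

lemma dotZ_add_right (a y y' : Fin d → ℤ_[p]) :
    dotZ p d a (y + y') = dotZ p d a y + dotZ p d a y' := by
  simp only [dotZ, ← Finset.sum_add_distrib]
  exact Finset.sum_congr rfl fun i _ => by simp [Pi.add_apply, mul_add]

lemma continuous_of_invariant {n : ℕ} {φ : (Fin d → ℤ_[p]) → ℂ}
    (hφ : InvariantUnder p d n φ) : Continuous φ := by
  apply IsLocallyConstant.continuous
  rw [IsLocallyConstant.iff_exists_open]
  intro u
  refine ⟨Metric.ball u ((p:ℝ) ^ (-(n:ℤ))), Metric.isOpen_ball, ?_, fun w hw => ?_⟩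
  · apply Metric.mem_ball_self
    have : (0:ℝ) < p := by exact_mod_cast (Fact.out : p.Prime).pos
    positivity
  · have hwu : ∀ i, ‖w i - u i‖ ≤ (p:ℝ) ^ (-(n:ℤ)) := by
      intro i
      have h1 : dist (w i) (u i) ≤ dist w u := dist_le_pi_dist w u i
      have h2 : dist w u < (p:ℝ) ^ (-(n:ℤ)) := Metric.mem_ball.1 hw
      rw [← dist_eq_norm]
      exact le_of_lt (lt_of_le_of_lt h1 h2)
    have := hφ u (w - u) hwu
    simpa using this

end Stmt5Aux

open Stmt5Aux in

/-- For `λ` with `|λ|_p = p^n > 1` and `ξ, η ∈ (ℚ_p/ℤ_p)^d`, the formula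
`π_{(ξ,η,λ)}(x,y,z)φ(u) = e^{2πi{ξ·x + η·y + λ(z + u·y)}_p} φ(u+x)` defines a unitary
representation of `H_d(ℤ_p)` on the space `H_λ` of functions on `ℤ_p^d` invariant under
translation by `p^n ℤ_p^d`. -/
theorem piAct_unitary_representation (ξ η : Fin d → ℚ_[p]) (lam : ℚ_[p]) (n : ℕ)
    (hn : 0 < n) (hlam : ‖lam‖ = (p : ℝ) ^ (n : ℤ)) :
    (∀ (g : Heis p d) (φ : (Fin d → ℤ_[p]) → ℂ), InvariantUnder p d n φ →
        InvariantUnder p d n (piAct p d ξ η lam g φ)) ∧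
    (∀ φ : (Fin d → ℤ_[p]) → ℂ, piAct p d ξ η lam 1 φ = φ) ∧
    (∀ (g g' : Heis p d) (φ : (Fin d → ℤ_[p]) → ℂ),
        piAct p d ξ η lam (g * g') φ = piAct p d ξ η lam g (piAct p d ξ η lam g' φ)) ∧
    (∀ μ : MeasureTheory.Measure (Fin d → ℤ_[p]),
        (∀ v, μ.map (· + v) = μ) → μ Set.univ = 1 →
        ∀ (g : Heis p d) (φ ψ : (Fin d → ℤ_[p]) → ℂ), InvariantUnder p d n φ →
          InvariantUnder p d n ψ →
          ∫ u, piAct p d ξ η lam g φ u * (starRingEnd ℂ) (piAct p d ξ η lam g ψ u) ∂μ =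
            ∫ u, φ u * (starRingEnd ℂ) (ψ u) ∂μ) := by
  have hpR : (0:ℝ) < p := by exact_mod_cast (Fact.out : p.Prime).pos
  refine ⟨?_, ?_, ?_, ?_⟩
  · -- invariance
    intro g φ hφ u v hv
    simp only [piAct]
    have hφ' : φ (u + v + g.x) = φ (u + g.x) := by
      rw [show u + v + g.x = u + g.x + v by abel]
      exact hφ (u + g.x) v hv
    rw [hφ']
    congr 1
    have harg : dotQZ p d ξ g.x + dotQZ p d η g.y +
        lam * ((g.z : ℚ_[p]) + ((dotZ p d (u + v) g.y : ℤ_[p]) : ℚ_[p]))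
        = (dotQZ p d ξ g.x + dotQZ p d η g.y +
            lam * ((g.z : ℚ_[p]) + ((dotZ p d u g.y : ℤ_[p]) : ℚ_[p])))
          + lam * ((dotZ p d v g.y : ℤ_[p]) : ℚ_[p]) := by
      rw [dotZ_add_left u v g.y]; push_cast; ring
    have hnorm : ‖lam * ((dotZ p d v g.y : ℤ_[p]) : ℚ_[p])‖ ≤ 1 := by
      rw [norm_mul, PadicInt.padic_norm_e_of_padicInt, hlam]
      calc (p:ℝ) ^ (n:ℤ) * ‖dotZ p d v g.y‖ ≤ (p:ℝ) ^ (n:ℤ) * (p:ℝ) ^ (-(n:ℤ)) := by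
            exact mul_le_mul_of_nonneg_left (norm_dotZ_le n v g.y hv) (by positivity)
        _ = 1 := by rw [← zpow_add₀ (ne_of_gt hpR)]; simp
    rw [harg, eChar_add, eChar_of_norm_le _ hnorm, mul_one]
  · -- identity
    intro φ
    funext u
    simp [piAct, heis_one_def, dotQZ, dotZ, eChar_zero]
  · -- multiplicativity
    intro g g' φ
    funext u
    simp only [piAct, heis_mul_def]
    rw [← mul_assoc, ← eChar_add]
    congr 1
    · congr 1
      rw [dotQZ_add ξ, dotQZ_add η, dotZ_add_right, dotZ_add_left]
      push_cast
      ring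
    · rw [add_assoc]
  · -- unitarity
    intro μ hμ _hμ1 g φ ψ hφ hψ
    have hcont : Continuous fun w => φ w * (starRingEnd ℂ) (ψ w) := by
      simp only [starRingEnd_apply]
      exact (continuous_of_invariant hφ).mul (continuous_of_invariant hψ).star
    have hptw : ∀ u, piAct p d ξ η lam g φ u * (starRingEnd ℂ) (piAct p d ξ η lam g ψ u)
        = φ (u + g.x) * (starRingEnd ℂ) (ψ (u + g.x)) := by
      intro u
      simp only [piAct, map_mul]
      rw [mul_mul_mul_comm, eChar_mul_conj, one_mul]
    have hmeas : Measurable fun u : Fin d → ℤ_[p] => u + g.x :=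
      (continuous_id.add continuous_const).measurable
    simp only [hptw]
    conv_rhs => rw [← hμ g.x]
    rw [MeasureTheory.integral_map hmeas.aemeasurable ?_]
    rw [hμ g.x]
    exact hcont.aestronglyMeasurable
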